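/- Fix A ∈ ℂ and define u(t,n) = A·i^{-n}·e^{-2it}·J_n(1-2t) for t ∈ ℝ and n ∈ ℤ. Then u satisfies the free discrete Schrödinger equation ∂_t u(t,n) = i(u(t,n+1) + u(t,n-1) - 2u(t,n)) for all t ∈ ℝ and n ∈ ℤ. -/

import Mathlib

noncomputable section

/-- Bessel function of the first kind of nonnegative integer order:
`J_n(x) = Σ_{m=0}^∞ (-1)^m/(m!·(m+n)!)·(x/2)^{2m+n}`. -/
def besselJnat (n : ℕ) (x : ℝ) : ℝ :=
  ∑' m : ℕ, ((-1 : ℝ) ^ m / (Nat.factorial m * Nat.factorial (m + n))) * (x / 2) ^ (2 * m + n)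

/-- Bessel function of integer order, with `J_{-n}(x) = (-1)^n J_n(x)`. -/
def besselJ (n : ℤ) (x : ℝ) : ℝ :=
  if 0 ≤ n then besselJnat n.toNat x
  else (-1 : ℝ) ^ (-n).toNat * besselJnat (-n).toNat x

/-- The explicit solution `u(t,n) = A i^{-n} e^{-2it} J_n(1-2t)`. -/
def uBessel (A : ℂ) (t : ℝ) (n : ℤ) : ℂ :=
  A * Complex.I ^ (-n) * Complex.exp (-2 * Complex.I * (t : ℂ)) * (besselJ n (1 - 2 * t) : ℂ)

open scoped Nat

namespace BesselAux


def term (n m : ℕ) (x : ℝ) : ℝ :=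
  ((-1 : ℝ) ^ m / (Nat.factorial m * Nat.factorial (m + n))) * (x / 2) ^ (2 * m + n)

def term' (n m : ℕ) (x : ℝ) : ℝ :=
  ((-1 : ℝ) ^ m / (Nat.factorial m * Nat.factorial (m + n))) *
    (((2 * m + n : ℕ) : ℝ) * (x / 2) ^ (2 * m + n - 1) * (1 / 2))

lemma hasDerivAt_term (n m : ℕ) (x : ℝ) :
    HasDerivAt (fun y => term n m y) (term' n m x) x := by
  have h : HasDerivAt (fun y : ℝ => (y / 2) ^ (2 * m + n))
      (((2 * m + n : ℕ) : ℝ) * (x / 2) ^ (2 * m + n - 1) * (1 / 2)) x := by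
    simpa using ((hasDerivAt_id x).div_const 2).fun_pow (2 * m + n)
  simpa [term, term'] using h.const_mul ((-1 : ℝ) ^ m / (Nat.factorial m * Nat.factorial (m + n)))

lemma summable_bound (n : ℕ) (Q : ℝ) :
    Summable (fun m : ℕ => Q ^ (2 * m + n) / m !) := by
  have h := (Real.summable_pow_div_factorial (Q ^ 2)).mul_left (Q ^ n)
  refine h.congr fun m => ?_
  rw [pow_add, pow_mul]
  ring

lemma norm_term_eq (n m : ℕ) (x : ℝ) :
    ‖term n m x‖ = |x / 2| ^ (2 * m + n) / ((m ! : ℝ) * (m + n)!) := by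
  have hden : (0:ℝ) < (m ! : ℝ) * (m + n)! := by positivity
  rw [term, Real.norm_eq_abs, abs_mul, abs_div, abs_pow, abs_pow, abs_neg, abs_one, one_pow,
    abs_of_pos hden]
  ring

lemma norm_term'_eq (n m : ℕ) (x : ℝ) :
    ‖term' n m x‖ = (((2 * m + n : ℕ) : ℝ) * |x / 2| ^ (2 * m + n - 1) * (1 / 2)) /
      ((m ! : ℝ) * (m + n)!) := by
  have hden : (0:ℝ) < (m ! : ℝ) * (m + n)! := by positivity
  have h2 : (0:ℝ) < (m ! : ℝ) := by positivity
  have h3 : (0:ℝ) < ((m + n)! : ℝ) := by positivity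
  have h4 : (0:ℝ) ≤ 2 * (m:ℝ) + n := by positivity
  simp [term', Real.norm_eq_abs, abs_mul, abs_div, abs_pow, Nat.abs_cast, abs_of_pos h2,
    abs_of_pos h3]
  rw [abs_of_nonneg h4]
  ring

lemma abs_term_le (n m : ℕ) {x Q : ℝ} (h1 : 1 ≤ Q) (h2 : |x / 2| ≤ Q) :
    ‖term n m x‖ ≤ (2 * Q) ^ (2 * m + n) / m ! := by
  have hQ0 : (0 : ℝ) ≤ Q := le_trans zero_le_one h1
  have hfac : (1 : ℝ) ≤ ((m + n)! : ℝ) := by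
    exact_mod_cast Nat.one_le_iff_ne_zero.mpr (Nat.factorial_ne_zero _)
  have hm : (0 : ℝ) < (m ! : ℝ) := by positivity
  rw [norm_term_eq]
  have h3 : |x / 2| ^ (2 * m + n) ≤ (2 * Q) ^ (2 * m + n) :=
    pow_le_pow_left₀ (abs_nonneg _) (by linarith) _
  have h4 : (m ! : ℝ) ≤ (m ! : ℝ) * (m + n)! := le_mul_of_one_le_right hm.le hfac
  exact div_le_div₀ (by positivity) h3 hm h4

lemma abs_term'_le (n m : ℕ) {x Q : ℝ} (h1 : 1 ≤ Q) (h2 : |x / 2| ≤ Q) :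
    ‖term' n m x‖ ≤ (2 * Q) ^ (2 * m + n) / m ! := by
  have hQ0 : (0 : ℝ) ≤ Q := le_trans zero_le_one h1
  have hfac : (1 : ℝ) ≤ ((m + n)! : ℝ) := by
    exact_mod_cast Nat.one_le_iff_ne_zero.mpr (Nat.factorial_ne_zero _)
  have hm : (0 : ℝ) < (m ! : ℝ) := by positivity
  rw [norm_term'_eq]
  have hk : ((2 * m + n : ℕ) : ℝ) ≤ 2 ^ (2 * m + n) := by
    exact_mod_cast (Nat.lt_two_pow_self).le
  have hp : |x / 2| ^ (2 * m + n - 1) ≤ Q ^ (2 * m + n) :=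
    le_trans (pow_le_pow_left₀ (abs_nonneg _) h2 _) (pow_le_pow_right₀ h1 (Nat.sub_le _ _))
  have hmm : ((2 * m + n : ℕ) : ℝ) * |x / 2| ^ (2 * m + n - 1) ≤
      2 ^ (2 * m + n) * Q ^ (2 * m + n) :=
    mul_le_mul hk hp (by positivity) (by positivity)
  have h5 : (0:ℝ) ≤ ((2 * m + n : ℕ) : ℝ) * |x / 2| ^ (2 * m + n - 1) := by positivity
  have hnum : ((2 * m + n : ℕ) : ℝ) * |x / 2| ^ (2 * m + n - 1) * (1 / 2) ≤
      (2 * Q) ^ (2 * m + n) := by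
    rw [mul_pow]; linarith
  have h4 : (m ! : ℝ) ≤ (m ! : ℝ) * (m + n)! := le_mul_of_one_le_right hm.le hfac
  exact div_le_div₀ (by positivity) hnum hm h4

lemma summable_term (n : ℕ) (x : ℝ) : Summable (fun m => term n m x) := by
  set Q : ℝ := max 1 |x / 2| with hQ
  have h1 : 1 ≤ Q := le_max_left _ _
  have h2 : |x / 2| ≤ Q := le_max_right _ _
  exact Summable.of_norm_bounded (summable_bound n (2 * Q)) fun m => abs_term_le n m h1 h2

lemma hasSum_term (n : ℕ) (x : ℝ) : HasSum (fun m => term n m x) (besselJnat n x) :=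
  (summable_term n x).hasSum

lemma summable_term' (n : ℕ) (x : ℝ) : Summable (fun m => term' n m x) := by
  set Q : ℝ := max 1 |x / 2| with hQ
  have h1 : 1 ≤ Q := le_max_left _ _
  have h2 : |x / 2| ≤ Q := le_max_right _ _
  exact Summable.of_norm_bounded (summable_bound n (2 * Q)) fun m => abs_term'_le n m h1 h2

lemma hasDerivAt_besselJnat (n : ℕ) (x : ℝ) :
    HasDerivAt (fun y => besselJnat n y) (∑' m, term' n m x) x := by
  set Q : ℝ := |x| / 2 + 1 with hQdef
  have h1 : 1 ≤ Q := by simp [hQdef]; positivity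
  have hu : Summable (fun m : ℕ => (2 * Q) ^ (2 * m + n) / m !) := summable_bound n _
  have key := hasDerivAt_tsum_of_isPreconnected hu
    (Metric.isOpen_ball (x := (0:ℝ)) (ε := |x| + 2)) (convex_ball (0:ℝ) _).isPreconnected
    (fun m y _ => hasDerivAt_term n m y)
    (fun m y hy => by
      refine abs_term'_le n m h1 ?_
      have hy' : |y| < |x| + 2 := by simpa [Real.dist_eq] using hy
      rw [abs_div, abs_two, hQdef]
      linarith)
    (show x ∈ Metric.ball (0:ℝ) (|x| + 2) by
      simp [Real.dist_eq])
    (summable_term n x)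
    (show x ∈ Metric.ball (0:ℝ) (|x| + 2) by
      simp [Real.dist_eq])
  simpa [besselJnat, term] using key

lemma hasSum_shift {g h0 : ℕ → ℝ} {a : ℝ} (hg : HasSum g a)
    (H0 : h0 0 = 0) (Hs : ∀ k, h0 (k + 1) = g k) : HasSum h0 a := by
  have h1 : HasSum (fun n => h0 (n + 1)) a := by simpa [Hs] using hg
  have h2 := (hasSum_nat_add_iff (f := h0) 1).mp h1
  simpa [H0] using h2

def shiftTerm (n : ℕ) (x : ℝ) : ℕ → ℝ
  | 0 => 0
  | (k + 1) => term n k x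

lemma deriv_identity_succ (n : ℕ) (x : ℝ) :
    ∑' m, term' (n + 1) m x = (besselJnat n x - besselJnat (n + 2) x) / 2 := by
  have h1 := hasSum_term n x
  have h2' : HasSum (shiftTerm (n + 2) x) (besselJnat (n + 2) x) :=
    hasSum_shift (hasSum_term (n + 2) x) rfl (fun k => rfl)
  have h3 := h1.sub h2'
  have key : ∀ m : ℕ, term n m x - shiftTerm (n + 2) x m = 2 * term' (n + 1) m x := by
    intro m
    cases m with
    | zero =>
        simp only [term, term', shiftTerm]
        have e3 : 2 * 0 + (n + 1) - 1 = 2 * 0 + n := by omega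
        rw [e3]
        have f3 : 0 + (n + 1) = (0 + n) + 1 := by ring
        rw [f3, Nat.factorial_succ (0 + n)]
        push_cast
        have hfn : ((0 + n)! : ℝ) ≠ 0 := by positivity
        field_simp
        ring
    | succ k =>
        simp only [term, term', shiftTerm]
        have e1 : 2 * (k + 1) + n = 2 * k + n + 2 := by ring
        have e2 : 2 * k + (n + 2) = 2 * k + n + 2 := by ring
        have e3 : 2 * (k + 1) + (n + 1) - 1 = 2 * k + n + 2 := by omega
        have e4 : 2 * (k + 1) + (n + 1) = 2 * k + n + 3 := by ring
        rw [e1, e2, e3, e4]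
        have f1 : (k + 1) + n = (k + n) + 1 := by ring
        have f2 : k + (n + 2) = (k + n + 1) + 1 := by ring
        have f3 : (k + 1) + (n + 1) = (k + n + 1) + 1 := by ring
        rw [f1, f2, f3, Nat.factorial_succ (k + n + 1), Nat.factorial_succ (k + n),
          Nat.factorial_succ k]
        push_cast
        have ha : ((k + n)! : ℝ) ≠ 0 := by positivity
        have hb : ((k)! : ℝ) ≠ 0 := by positivity
        field_simp
        ring
  have h4 : HasSum (fun m => 2 * term' (n + 1) m x)
      (besselJnat n x - besselJnat (n + 2) x) := by
    simpa only [key] using h3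
  have h5 : HasSum (fun m => term' (n + 1) m x)
      ((besselJnat n x - besselJnat (n + 2) x) / 2) := by
    simpa using h4.div_const 2
  exact h5.tsum_eq

lemma deriv_identity_zero (x : ℝ) : ∑' m, term' 0 m x = -besselJnat 1 x := by
  have h := (hasSum_term 1 x).neg
  have h' : HasSum (fun m => term' 0 m x) (-besselJnat 1 x) := by
    refine hasSum_shift h ?_ ?_
    · simp [term']
    · intro k
      simp only [term, term']
      have e3 : 2 * (k + 1) + 0 - 1 = 2 * k + 1 := by omega
      have e4 : 2 * (k + 1) + 0 = 2 * k + 2 := by ring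
      have e5 : 2 * k + 1 = 2 * k + 1 := rfl
      rw [e3, e4]
      have f1 : (k + 1) + 0 = k + 1 := by ring
      have f2 : k + 1 = k + 1 := rfl
      rw [f1, Nat.factorial_succ k]
      push_cast
      have hb : ((k)! : ℝ) ≠ 0 := by positivity
      field_simp
      ring
  exact h'.tsum_eq


lemma besselJ_hasDerivAt (n : ℤ) (x : ℝ) :
    HasDerivAt (fun y => besselJ n y) ((besselJ (n - 1) x - besselJ (n + 1) x) / 2) x := by
  rcases lt_trichotomy n 0 with hn | rfl | hn
  · obtain ⟨j, hj⟩ : ∃ j, (-n).toNat = j + 1 := ⟨(-n).toNat - 1, by omega⟩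
    have hfun : (fun y => besselJ n y) = fun y => (-1 : ℝ) ^ (j + 1) * besselJnat (j + 1) y := by
      funext y; simp [besselJ, not_le.mpr hn, hj]
    have hd := (hasDerivAt_besselJnat (j + 1) x).const_mul ((-1 : ℝ) ^ (j + 1))
    rw [deriv_identity_succ j x] at hd
    rw [hfun]
    refine hd.congr_deriv ?_
    have hn1 : besselJ (n - 1) x = (-1 : ℝ) ^ (j + 2) * besselJnat (j + 2) x := by
      have h1 : ¬(0 ≤ n - 1) := by omega
      have h2 : (-(n - 1)).toNat = j + 2 := by omega
      simp only [besselJ, if_neg h1, h2]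
    have hn2 : besselJ (n + 1) x = (-1 : ℝ) ^ j * besselJnat j x := by
      by_cases h : n + 1 = 0
      · have hj0 : j = 0 := by omega
        simp [besselJ, h, hj0]
      · have h1 : ¬(0 ≤ n + 1) := by omega
        have h2 : (-(n + 1)).toNat = j := by omega
        simp only [besselJ, if_neg h1, h2]
    rw [hn1, hn2, pow_add, pow_add]
    norm_num
    ring
  · have hfun : (fun y => besselJ 0 y) = fun y => besselJnat 0 y := by
      funext y; simp [besselJ]
    have hd := hasDerivAt_besselJnat 0 x
    rw [deriv_identity_zero x] at hd
    rw [show ((0 : ℤ)) = (0 : ℤ) from rfl, hfun]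
    convert hd using 1
    have hn1 : besselJ (0 - 1) x = -besselJnat 1 x := by
      norm_num [besselJ]
    have hn2 : besselJ (0 + 1) x = besselJnat 1 x := by
      norm_num [besselJ]
    rw [hn1, hn2]
    ring
  · obtain ⟨j, hj⟩ : ∃ j, n.toNat = j + 1 := ⟨n.toNat - 1, by omega⟩
    have hfun : (fun y => besselJ n y) = fun y => besselJnat (j + 1) y := by
      funext y; simp [besselJ, hn.le, hj]
    have hd := hasDerivAt_besselJnat (j + 1) x
    rw [deriv_identity_succ j x] at hd
    rw [hfun]
    convert hd using 1
    have hn1 : besselJ (n - 1) x = besselJnat j x := by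
      have h1 : (0 : ℤ) ≤ n - 1 := by omega
      have h2 : (n - 1).toNat = j := by omega
      simp only [besselJ, if_pos h1, h2]
    have hn2 : besselJ (n + 1) x = besselJnat (j + 2) x := by
      have h1 : (0 : ℤ) ≤ n + 1 := by omega
      have h2 : (n + 1).toNat = j + 2 := by omega
      simp only [besselJ, if_pos h1, h2]
    rw [hn1, hn2]

end BesselAux

open BesselAux in
/-- `u(t,n) = A i^{-n} e^{-2it} J_n(1-2t)` satisfies the free discrete
Schrödinger equation `∂_t u(t,n) = i(u(t,n+1) + u(t,n-1) - 2u(t,n))`. -/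
theorem uBessel_solves_free_schrodinger (A : ℂ) (t : ℝ) (n : ℤ) :
    HasDerivAt (fun s : ℝ => uBessel A s n)
      (Complex.I * (uBessel A t (n + 1) + uBessel A t (n - 1) - 2 * uBessel A t n)) t := by
  set x₀ : ℝ := 1 - 2 * t with hx₀
  -- derivative of the Bessel factor
  have hlin : HasDerivAt (fun s : ℝ => 1 - 2 * s) (-2 : ℝ) t := by
    simpa using ((hasDerivAt_id t).const_mul (2 : ℝ)).const_sub 1
  have hJ : HasDerivAt (fun s : ℝ => besselJ n (1 - 2 * s))
      (besselJ (n + 1) x₀ - besselJ (n - 1) x₀) t := by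
    have := (besselJ_hasDerivAt n x₀).comp t hlin
    refine this.congr_deriv ?_
    ring
  have hJc : HasDerivAt (fun s : ℝ => ((besselJ n (1 - 2 * s) : ℝ) : ℂ))
      ((besselJ (n + 1) x₀ - besselJ (n - 1) x₀ : ℝ) : ℂ) t := hJ.ofReal_comp
  -- derivative of the exponential factor
  have hid : HasDerivAt (fun s : ℝ => ((s : ℝ) : ℂ)) 1 t := by
    simpa using (hasDerivAt_id t).ofReal_comp
  have hexp : HasDerivAt (fun s : ℝ => Complex.exp (-2 * Complex.I * (s : ℂ)))
      (-2 * Complex.I * Complex.exp (-2 * Complex.I * (t : ℂ))) t := by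
    have h1 : HasDerivAt (fun s : ℝ => -2 * Complex.I * (s : ℂ)) (-2 * Complex.I) t := by
      simpa using hid.const_mul (-2 * Complex.I)
    simpa [mul_comm] using h1.cexp
  have hprod := hexp.mul hJc
  have hfull := hprod.const_mul (A * Complex.I ^ (-n))
  have hfun : (fun s : ℝ => uBessel A s n) =
      fun s : ℝ => A * Complex.I ^ (-n) *
        (Complex.exp (-2 * Complex.I * (s : ℂ)) * ((besselJ n (1 - 2 * s) : ℝ) : ℂ)) := by
    funext s; simp [uBessel]; ring
  rw [hfun]
  refine hfull.congr_deriv ?_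
  -- now the algebraic identity
  simp only [uBessel, ← hx₀]
  have hI : Complex.I ≠ 0 := Complex.I_ne_zero
  have e1 : Complex.I ^ (-(n + 1)) = Complex.I ^ (-n) * Complex.I⁻¹ := by
    rw [show -(n + 1) = -n + (-1) by ring, zpow_add₀ hI, zpow_neg_one]
  have e2 : Complex.I ^ (-(n - 1)) = Complex.I ^ (-n) * Complex.I := by
    rw [show -(n - 1) = -n + 1 by ring, zpow_add₀ hI, zpow_one]
  rw [e1, e2, Complex.inv_I]
  push_cast
  ring_nf
  rw [Complex.I_sq]
  ring
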